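/- arXiv:1307.7880 — 2 statements merged into one kernel-verified Lean document; each statement's English description precedes it below -/
import Mathlib

section
/- Let M₁, M₂, M₃ ∈ SL_2(ℂ). Set a₁ = Tr(M₁), a₂ = Tr(M₂), a₃ = Tr(M₃), a₄ = Tr(M₃M₂M₁), and x₁ = Tr(M₃M₂), x₂ = Tr(M₁M₃), x₃ = Tr(M₂M₁). Then x₁x₂x₃ + x₁² + x₂² + x₃² − θ₁x₁ − θ₂x₂ − θ₃x₃ + θ₄ = 0, where θᵢ = aᵢa₄ + aⱼa_k for (i,j,k) a cyclic permutation of (1,2,3), and θ₄ = a₁a₂a₃a₄ + a₁² + a₂² + a₃² + a₄² − 4. -/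
open Matrix

theorem fricke_klein_cubic_relation (M₁ M₂ M₃ : Matrix (Fin 2) (Fin 2) ℂ)
    (h₁ : M₁.det = 1) (h₂ : M₂.det = 1) (h₃ : M₃.det = 1)
    (a₁ a₂ a₃ a₄ x₁ x₂ x₃ θ₁ θ₂ θ₃ θ₄ : ℂ)
    (ha₁ : a₁ = Matrix.trace M₁) (ha₂ : a₂ = Matrix.trace M₂)
    (ha₃ : a₃ = Matrix.trace M₃) (ha₄ : a₄ = Matrix.trace (M₃ * M₂ * M₁))
    (hx₁ : x₁ = Matrix.trace (M₃ * M₂)) (hx₂ : x₂ = Matrix.trace (M₁ * M₃))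
    (hx₃ : x₃ = Matrix.trace (M₂ * M₁))
    (hθ₁ : θ₁ = a₁ * a₄ + a₂ * a₃)
    (hθ₂ : θ₂ = a₂ * a₄ + a₃ * a₁)
    (hθ₃ : θ₃ = a₃ * a₄ + a₁ * a₂)
    (hθ₄ : θ₄ = a₁ * a₂ * a₃ * a₄ + a₁ ^ 2 + a₂ ^ 2 + a₃ ^ 2 + a₄ ^ 2 - 4) :
    x₁ * x₂ * x₃ + x₁ ^ 2 + x₂ ^ 2 + x₃ ^ 2
      - θ₁ * x₁ - θ₂ * x₂ - θ₃ * x₃ + θ₄ = 0 := by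
  subst ha₁ ha₂ ha₃ ha₄ hx₁ hx₂ hx₃ hθ₁ hθ₂ hθ₃ hθ₄
  simp only [Matrix.det_fin_two] at h₁ h₂ h₃
  simp only [Matrix.trace_fin_two, Matrix.mul_apply, Fin.sum_univ_two]
  linear_combination ((1) * M₂ 0 0 * M₂ 0 0 * M₃ 0 0 * M₃ 1 1 + (-1) * M₂ 0 0 * M₂ 0 0 + (-1) * M₂ 0 0 * M₂ 0 1 * M₃ 0 0 * M₃ 1 0 + (1) * M₂ 0 0 * M₂ 0 1 * M₃ 1 0 * M₃ 1 1 + (-1) * M₂ 0 0 * M₂ 1 0 * M₃ 0 0 * M₃ 0 1 + (1) * M₂ 0 0 * M₂ 1 0 * M₃ 0 1 * M₃ 1 1 + (1) * M₂ 0 0 * M₂ 1 1 * M₃ 0 0 * M₃ 0 0 + (-2) * M₂ 0 0 * M₂ 1 1 * M₃ 0 0 * M₃ 1 1 + (1) * M₂ 0 0 * M₂ 1 1 * M₃ 1 1 * M₃ 1 1 + (-1) * M₂ 0 1 * M₂ 0 1 * M₃ 1 0 * M₃ 1 0 + (1) * M₂ 0 1 * M₂ 1 1 * M₃ 0 0 *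 M₃ 1 0 + (-1) * M₂ 0 1 * M₂ 1 1 * M₃ 1 0 * M₃ 1 1 + (-1) * M₂ 1 0 * M₂ 1 0 * M₃ 0 1 * M₃ 0 1 + (1) * M₂ 1 0 * M₂ 1 1 * M₃ 0 0 * M₃ 0 1 + (-1) * M₂ 1 0 * M₂ 1 1 * M₃ 0 1 * M₃ 1 1 + (1) * M₂ 1 1 * M₂ 1 1 * M₃ 0 0 * M₃ 1 1 + (-1) * M₂ 1 1 * M₂ 1 1 + (-1) * M₃ 0 0 * M₃ 0 0 + (-1) * M₃ 1 1 * M₃ 1 1 + (2)) * h₁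
      + ((1) * M₁ 0 0 * M₁ 0 0 * M₃ 0 0 * M₃ 1 1 + (-1) * M₁ 0 0 * M₁ 0 0 + (-1) * M₁ 0 0 * M₁ 0 1 * M₃ 0 0 * M₃ 1 0 + (1) * M₁ 0 0 * M₁ 0 1 * M₃ 1 0 * M₃ 1 1 + (-1) * M₁ 0 0 * M₁ 1 0 * M₃ 0 0 * M₃ 0 1 + (1) * M₁ 0 0 * M₁ 1 0 * M₃ 0 1 * M₃ 1 1 + (-1) * M₁ 0 1 * M₁ 0 1 * M₃ 1 0 * M₃ 1 0 + (1) * M₁ 0 1 * M₁ 1 0 * M₃ 0 0 * M₃ 0 0 + (-2) * M₁ 0 1 * M₁ 1 0 * M₃ 0 0 * M₃ 1 1 + (1) * M₁ 0 1 * M₁ 1 0 * M₃ 1 1 * M₃ 1 1 + (1) * M₁ 0 1 * M₁ 1 1 * M₃ 0 0 * M₃ 1 0 + (-1) * M₁ 0 1 * M₁ 1 1 * M₃ 1 0 * M₃ 1 1 + (-1) * M₁ 1 0 * M₁ 1 0 * M₃ 0 1 * M₃ 0 1 + (1) * M₁ 1 0 * M₁ 1 1 * M₃ 0 0 * M₃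 0 1 + (-1) * M₁ 1 0 * M₁ 1 1 * M₃ 0 1 * M₃ 1 1 + (1) * M₁ 1 1 * M₁ 1 1 * M₃ 0 0 * M₃ 1 1 + (-1) * M₁ 1 1 * M₁ 1 1 + (-2) * M₃ 0 0 * M₃ 1 1 + (2)) * h₂
      + ((1) * M₁ 0 0 * M₁ 0 0 * M₂ 0 1 * M₂ 1 0 + (-1) * M₁ 0 0 * M₁ 0 1 * M₂ 0 0 * M₂ 1 0 + (1) * M₁ 0 0 * M₁ 0 1 * M₂ 1 0 * M₂ 1 1 + (-1) * M₁ 0 0 * M₁ 1 0 * M₂ 0 0 * M₂ 0 1 + (1) * M₁ 0 0 * M₁ 1 0 * M₂ 0 1 * M₂ 1 1 + (-1) * M₁ 0 1 * M₁ 0 1 * M₂ 1 0 * M₂ 1 0 + (1) * M₁ 0 1 * M₁ 1 0 * M₂ 0 0 * M₂ 0 0 + (-2) * M₁ 0 1 * M₁ 1 0 * M₂ 0 1 * M₂ 1 0 + (1) * M₁ 0 1 * M₁ 1 0 * M₂ 1 1 * M₂ 1 1 + (-2) * M₁ 0 1 * M₁ 1 0 + (1) * M₁ 0 1 * M₁ 1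 1 * M₂ 0 0 * M₂ 1 0 + (-1) * M₁ 0 1 * M₁ 1 1 * M₂ 1 0 * M₂ 1 1 + (-1) * M₁ 1 0 * M₁ 1 0 * M₂ 0 1 * M₂ 0 1 + (1) * M₁ 1 0 * M₁ 1 1 * M₂ 0 0 * M₂ 0 1 + (-1) * M₁ 1 0 * M₁ 1 1 * M₂ 0 1 * M₂ 1 1 + (1) * M₁ 1 1 * M₁ 1 1 * M₂ 0 1 * M₂ 1 0 + (-2) * M₂ 0 1 * M₂ 1 0) * h₃
end

section
/- Fix k ∈ ℂ and α⁺, α⁻ ∈ ℂ with α⁺ + α⁻ = k, α⁺α⁻ = 1 and α⁺ ≠ α⁻. The map sending ([S:T],[U:V]) ∈ ℙ¹ × ℙ¹ to [a:b:c:d:e] ∈ ℙ⁴ with a = (α⁻SU + α⁺TV)/(α⁺−α⁻), b = SV, c = TU, d = (α⁺SU + α⁻TV)/(α⁺−α⁻), e = (SU + TV)/(α⁺−α⁻) is a well-defined bijection from ℙ¹ × ℙ¹ onto the subvariety of ℙ⁴ defined by the equations a + d = ke and ad − bc = e². -/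
open Matrix

namespace P1P1Aux

noncomputable def Fv (αp αm S T U V : ℂ) : Fin 5 → ℂ :=
  ![(αm * S * U + αp * T * V) / (αp - αm), S * V, T * U,
    (αp * S * U + αm * T * V) / (αp - αm),
    (S * U + T * V) / (αp - αm)]

def Gv (αp αm : ℂ) (v : Fin 5 → ℂ) : Fin 4 → ℂ :=
  ![αp * v 4 - v 0, v 1, v 2, v 0 - αm * v 4]

lemma eta2 (v : Fin 2 → ℂ) : ![v 0, v 1] = v := by
  funext i; fin_cases i <;> rfl

lemma eta5 (v : Fin 5 → ℂ) : ![v 0, v 1, v 2, v 3, v 4] = v := by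
  funext i; fin_cases i <;> rfl

lemma vec2_ne {S T : ℂ} (h : ![S, T] ≠ 0) : S ≠ 0 ∨ T ≠ 0 := by
  by_contra hc
  push_neg at hc
  exact h (by rw [hc.1, hc.2]; funext i; fin_cases i <;> rfl)

lemma vec2_ne' {S T : ℂ} (h : S ≠ 0 ∨ T ≠ 0) : ![S, T] ≠ 0 := by
  intro hc
  have h0 := congrFun hc 0
  have h1 := congrFun hc 1
  simp at h0 h1
  rcases h with h | h <;> [exact h h0; exact h h1]

lemma rep2_ne (x : Projectivization ℂ (Fin 2 → ℂ)) : x.rep 0 ≠ 0 ∨ x.rep 1 ≠ 0 :=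
  vec2_ne (by rw [eta2]; exact x.rep_nonzero)

lemma Fv_smul (αp αm S T U V l m : ℂ) :
    Fv αp αm (l * S) (l * T) (m * U) (m * V) = (l * m) • Fv αp αm S T U V := by
  funext i
  fin_cases i <;> simp [Fv, smul_eq_mul] <;> ring

lemma Gv_smul (αp αm a : ℂ) (v : Fin 5 → ℂ) :
    Gv αp αm (a • v) = a • Gv αp αm v := by
  funext i
  fin_cases i <;> simp [Gv, smul_eq_mul] <;> ring

lemma Gv_Fv {αp αm : ℂ} (hD : αp - αm ≠ 0) (S T U V : ℂ) :
    Gv αp αm (Fv αp αm S T U V) = ![S * U, S * V, T * U, T * V] := by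
  funext i
  fin_cases i <;> simp [Fv, Gv] <;> field_simp <;> ring

lemma Fv_ne {αp αm : ℂ} (hD : αp - αm ≠ 0) {S T U V : ℂ}
    (hS : S ≠ 0 ∨ T ≠ 0) (hU : U ≠ 0 ∨ V ≠ 0) :
    Fv αp αm S T U V ≠ 0 := by
  intro h
  have hG := congrArg (Gv αp αm) h
  rw [Gv_Fv hD] at hG
  have hz : Gv αp αm 0 = 0 := by
    funext i; fin_cases i <;> simp [Gv]
  rw [hz] at hG
  have h0 := congrFun hG 0
  have h1 := congrFun hG 1
  have h2 := congrFun hG 2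
  have h3 := congrFun hG 3
  simp at h0 h1 h2 h3
  rcases hS with hS | hS <;> rcases hU with hU | hU
  · rcases h0 with h | h <;> [exact hS h; exact hU h]
  · rcases h1 with h | h <;> [exact hS h; exact hU h]
  · rcases h2 with h | h <;> [exact hS h; exact hU h]
  · rcases h3 with h | h <;> [exact hS h; exact hU h]

lemma Fv_eq1 {k αp αm : ℂ} (hsum : αp + αm = k) (hD : αp - αm ≠ 0) (S T U V : ℂ) :
    Fv αp αm S T U V 0 + Fv αp αm S T U V 3 = k * Fv αp αm S T U V 4 := by
  show (αm * S * U + αp * T * V) / (αp - αm) + (αp * S * U + αm * T * V) / (αp - αm)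
      = k * ((S * U + T * V) / (αp - αm))
  rw [← add_div, ← mul_div_assoc]
  rw [show αm * S * U + αp * T * V + (αp * S * U + αm * T * V) = k * (S * U + T * V) from by
    linear_combination (S * U + T * V) * hsum]

lemma Fv_eq2 {αp αm : ℂ} (hprod : αp * αm = 1) (hD : αp - αm ≠ 0) (S T U V : ℂ) :
    Fv αp αm S T U V 0 * Fv αp αm S T U V 3 - Fv αp αm S T U V 1 * Fv αp αm S T U V 2
      = (Fv αp αm S T U V 4) ^ 2 := by
  have hD2 : (αp - αm) ^ 2 ≠ 0 := pow_ne_zero 2 hD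
  show (αm * S * U + αp * T * V) / (αp - αm) * ((αp * S * U + αm * T * V) / (αp - αm))
      - S * V * (T * U) = ((S * U + T * V) / (αp - αm)) ^ 2
  have key : (αm * S * U + αp * T * V) * (αp * S * U + αm * T * V)
      - S * V * (T * U) * (αp - αm) ^ 2 = (S * U + T * V) ^ 2 := by
    linear_combination (S * U + T * V) ^ 2 * hprod
  rw [div_mul_div_comm, ← sq, div_pow, ← key, sub_div, mul_div_cancel_right₀ _ hD2]

/-- Core of Segre injectivity. -/
lemma seg_aux {a S T U V S' T' U' V' : ℂ} (ha : a ≠ 0) (hS' : S' ≠ 0) (hU' : U' ≠ 0)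
    (h1 : S * U = a * (S' * U')) (h2 : S * V = a * (S' * V'))
    (h3 : T * U = a * (T' * U')) (h4 : T * V = a * (T' * V')) :
    ∃ l m : ℂ, l ≠ 0 ∧ m ≠ 0 ∧ S = l * S' ∧ T = l * T' ∧ U = m * U' ∧ V = m * V' := by
  have hSU : S * U ≠ 0 := by
    rw [h1]; exact mul_ne_zero ha (mul_ne_zero hS' hU')
  have hS : S ≠ 0 := left_ne_zero_of_mul hSU
  have hU : U ≠ 0 := right_ne_zero_of_mul hSU
  have key1 : T * S' = S * T' := by
    have h : (T * S' - S * T') * (U * U') = 0 := by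
      linear_combination S' * U' * h3 - T' * U' * h1
    rcases mul_eq_zero.1 h with h | h
    · exact sub_eq_zero.1 h
    · exact absurd h (mul_ne_zero hU hU')
  have key2 : V * U' = U * V' := by
    have h : (V * U' - U * V') * (S * S') = 0 := by
      linear_combination S' * U' * h2 - S' * V' * h1
    rcases mul_eq_zero.1 h with h | h
    · exact sub_eq_zero.1 h
    · exact absurd h (mul_ne_zero hS hS')
  refine ⟨S / S', U / U', div_ne_zero hS hS', div_ne_zero hU hU',
    (div_mul_cancel₀ S hS').symm, ?_, (div_mul_cancel₀ U hU').symm, ?_⟩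
  · field_simp
    linear_combination key1
  · field_simp
    linear_combination key2

lemma segre_inj {a S T U V S' T' U' V' : ℂ} (ha : a ≠ 0)
    (hST' : S' ≠ 0 ∨ T' ≠ 0) (hUV' : U' ≠ 0 ∨ V' ≠ 0)
    (h1 : S * U = a * (S' * U')) (h2 : S * V = a * (S' * V'))
    (h3 : T * U = a * (T' * U')) (h4 : T * V = a * (T' * V')) :
    ∃ l m : ℂ, l ≠ 0 ∧ m ≠ 0 ∧ S = l * S' ∧ T = l * T' ∧ U = m * U' ∧ V = m * V' := by
  rcases hST' with hS' | hT' <;> rcases hUV' with hU' | hV'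
  · exact seg_aux ha hS' hU' h1 h2 h3 h4
  · obtain ⟨l, m, hl, hm, e1, e2, e3, e4⟩ := seg_aux ha hS' hV' h2 h1 h4 h3
    exact ⟨l, m, hl, hm, e1, e2, e4, e3⟩
  · obtain ⟨l, m, hl, hm, e1, e2, e3, e4⟩ := seg_aux ha hT' hU' h3 h4 h1 h2
    exact ⟨l, m, hl, hm, e2, e1, e3, e4⟩
  · obtain ⟨l, m, hl, hm, e1, e2, e3, e4⟩ := seg_aux ha hT' hV' h4 h3 h2 h1
    exact ⟨l, m, hl, hm, e2, e1, e4, e3⟩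

lemma surj_core {k αp αm : ℂ} (hsum : αp + αm = k) (hD : αp - αm ≠ 0)
    (v : Fin 5 → ℂ) (e1 : v 0 + v 3 = k * v 4) (S T U V : ℂ)
    (h1 : S * U = αp * v 4 - v 0) (h2 : S * V = v 1)
    (h3 : T * U = v 2) (h4 : T * V = v 0 - αm * v 4) :
    Fv αp αm S T U V = v := by
  funext i
  fin_cases i <;> simp [Fv]
  · field_simp
    linear_combination αm * h1 + αp * h4
  · exact h2
  · exact h3
  · field_simp
    linear_combination αp * h1 + αm * h4 + (v 4) * (αp - αm) * hsum - (αp - αm) * e1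
  · field_simp
    linear_combination h1 + h4

noncomputable def fmap (k αp αm : ℂ) (hsum : αp + αm = k) (hprod : αp * αm = 1)
    (hne : αp ≠ αm) :
    Projectivization ℂ (Fin 2 → ℂ) × Projectivization ℂ (Fin 2 → ℂ) →
      {x : Projectivization ℂ (Fin 5 → ℂ) //
        ∃ (v : Fin 5 → ℂ) (hv : v ≠ 0), x = Projectivization.mk ℂ v hv ∧
          v 0 + v 3 = k * v 4 ∧ v 0 * v 3 - v 1 * v 2 = (v 4) ^ 2} :=
  fun xy =>
    ⟨Projectivization.mk ℂ
        (Fv αp αm (xy.1.rep 0) (xy.1.rep 1) (xy.2.rep 0) (xy.2.rep 1))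
        (Fv_ne (sub_ne_zero.mpr hne) (rep2_ne xy.1) (rep2_ne xy.2)),
      Fv αp αm (xy.1.rep 0) (xy.1.rep 1) (xy.2.rep 0) (xy.2.rep 1),
      Fv_ne (sub_ne_zero.mpr hne) (rep2_ne xy.1) (rep2_ne xy.2), rfl,
      Fv_eq1 hsum (sub_ne_zero.mpr hne) _ _ _ _,
      Fv_eq2 hprod (sub_ne_zero.mpr hne) _ _ _ _⟩

lemma fmap_mk (k αp αm : ℂ) (hsum : αp + αm = k) (hprod : αp * αm = 1)
    (hne : αp ≠ αm) (S T U V : ℂ) (hST : ![S, T] ≠ 0) (hUV : ![U, V] ≠ 0) :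
    (fmap k αp αm hsum hprod hne (Projectivization.mk ℂ ![S, T] hST,
        Projectivization.mk ℂ ![U, V] hUV)).1 =
      Projectivization.mk ℂ (Fv αp αm S T U V)
        (Fv_ne (sub_ne_zero.mpr hne) (vec2_ne hST) (vec2_ne hUV)) := by
  have hD : αp - αm ≠ 0 := sub_ne_zero.mpr hne
  obtain ⟨a, ha⟩ := Projectivization.exists_smul_eq_mk_rep ℂ ![S, T] hST
  obtain ⟨b, hb⟩ := Projectivization.exists_smul_eq_mk_rep ℂ ![U, V] hUV
  set x := Projectivization.mk ℂ ![S, T] hST with hxdef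
  set y := Projectivization.mk ℂ ![U, V] hUV with hydef
  have e0 : x.rep 0 = (a : ℂ) * S := by rw [← ha]; simp [Units.smul_def]
  have e1 : x.rep 1 = (a : ℂ) * T := by rw [← ha]; simp [Units.smul_def]
  have f0 : y.rep 0 = (b : ℂ) * U := by rw [← hb]; simp [Units.smul_def]
  have f1 : y.rep 1 = (b : ℂ) * V := by rw [← hb]; simp [Units.smul_def]
  show Projectivization.mk ℂ (Fv αp αm (x.rep 0) (x.rep 1) (y.rep 0) (y.rep 1)) _ = _
  rw [Projectivization.mk_eq_mk_iff]
  refine ⟨a * b, ?_⟩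
  rw [e0, e1, f0, f1, Fv_smul]
  funext i
  simp [Units.smul_def]

lemma fmap_inj (k αp αm : ℂ) (hsum : αp + αm = k) (hprod : αp * αm = 1)
    (hne : αp ≠ αm) : Function.Injective (fmap k αp αm hsum hprod hne) := by
  have hD : αp - αm ≠ 0 := sub_ne_zero.mpr hne
  rintro ⟨x, y⟩ ⟨x', y'⟩ h
  have h1 := congrArg Subtype.val h
  simp only [fmap] at h1
  rw [Projectivization.mk_eq_mk_iff] at h1
  obtain ⟨a, ha⟩ := h1
  have ha' : (a : ℂ) • Fv αp αm (x'.rep 0) (x'.rep 1) (y'.rep 0) (y'.rep 1)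
      = Fv αp αm (x.rep 0) (x.rep 1) (y.rep 0) (y.rep 1) := by
    rw [← ha]; funext i; simp [Units.smul_def]
  have hG := congrArg (Gv αp αm) ha'
  rw [Gv_smul, Gv_Fv hD, Gv_Fv hD] at hG
  have c0 := congrFun hG 0
  have c1 := congrFun hG 1
  have c2 := congrFun hG 2
  have c3 := congrFun hG 3
  simp [smul_eq_mul] at c0 c1 c2 c3
  obtain ⟨l, m, hl, hm, eS, eT, eU, eV⟩ :=
    segre_inj a.ne_zero (rep2_ne x') (rep2_ne y') c0.symm c1.symm c2.symm c3.symm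
  have hx : x = x' := by
    rw [← x.mk_rep, ← x'.mk_rep, Projectivization.mk_eq_mk_iff]
    refine ⟨Units.mk0 l hl, ?_⟩
    funext i
    fin_cases i <;> simp [Units.smul_def]
    · exact eS.symm
    · exact eT.symm
  have hy : y = y' := by
    rw [← y.mk_rep, ← y'.mk_rep, Projectivization.mk_eq_mk_iff]
    refine ⟨Units.mk0 m hm, ?_⟩
    funext i
    fin_cases i <;> simp [Units.smul_def]
    · exact eU.symm
    · exact eV.symm
  simp [Prod.ext_iff]
  exact ⟨hx, hy⟩

lemma fmap_surj (k αp αm : ℂ) (hsum : αp + αm = k) (hprod : αp * αm = 1)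
    (hne : αp ≠ αm) : Function.Surjective (fmap k αp αm hsum hprod hne) := by
  have hD : αp - αm ≠ 0 := sub_ne_zero.mpr hne
  intro b
  obtain ⟨v, hv, hx, e1, e2⟩ := b.2
  set P : ℂ := αp * v 4 - v 0 with hP
  set Q : ℂ := v 0 - αm * v 4 with hQ
  have hPQ : P * Q = v 1 * v 2 := by
    rw [hP, hQ]
    linear_combination v 0 * v 4 * hsum - v 4 ^ 2 * hprod - v 0 * e1 + e2
  have main : ∀ S T U V : ℂ, ![S, T] ≠ 0 → ![U, V] ≠ 0 →
      S * U = P → S * V = v 1 → T * U = v 2 → T * V = Q →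
      ∃ a, fmap k αp αm hsum hprod hne a = b := by
    intro S T U V hST' hUV' m1 m2 m3 m4
    refine ⟨(Projectivization.mk ℂ ![S, T] hST', Projectivization.mk ℂ ![U, V] hUV'),
      Subtype.ext ?_⟩
    rw [fmap_mk, hx, Projectivization.mk_eq_mk_iff]
    refine ⟨1, ?_⟩
    rw [one_smul]
    exact (surj_core hsum hD v e1 S T U V m1 m2 m3 m4).symm
  have hne4 : P ≠ 0 ∨ v 1 ≠ 0 ∨ v 2 ≠ 0 ∨ Q ≠ 0 := by
    by_contra hc
    push_neg at hc
    obtain ⟨h0, h1, h2, h3⟩ := hc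
    apply hv
    have hv4 : v 4 = 0 := by
      have h : (αp - αm) * v 4 = 0 := by
        rw [hP] at h0; rw [hQ] at h3
        linear_combination h0 + h3
      exact (mul_eq_zero.1 h).resolve_left hD
    have hv0 : v 0 = 0 := by
      rw [hQ] at h3
      linear_combination h3 + αm * hv4
    have hv3 : v 3 = 0 := by
      linear_combination e1 - hv0 + k * hv4
    rw [← eta5 v, hv0, h1, h2, hv3, hv4]
    funext i; fin_cases i <;> rfl
  rcases hne4 with h | h | h | h
  · refine main P (v 2) 1 (v 1 / P) (vec2_ne' (Or.inl h)) (vec2_ne' (Or.inl one_ne_zero))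
      (mul_one P) ?_ (mul_one (v 2)) ?_
    · field_simp
    · field_simp
      linear_combination -hPQ
  · refine main (v 1) Q (P / v 1) 1 (vec2_ne' (Or.inl h)) (vec2_ne' (Or.inr one_ne_zero))
      ?_ (mul_one (v 1)) ?_ (mul_one Q)
    · field_simp
    · field_simp
      linear_combination hPQ
  · refine main P (v 2) 1 (Q / v 2) (vec2_ne' (Or.inr h)) (vec2_ne' (Or.inl one_ne_zero))
      (mul_one P) ?_ (mul_one (v 2)) ?_
    · field_simp
      linear_combination hPQ
    · field_simp
  · refine main (v 1) Q (v 2 / Q) 1 (vec2_ne' (Or.inr h)) (vec2_ne' (Or.inr one_ne_zero))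
      ?_ (mul_one (v 1)) ?_ (mul_one Q)
    · field_simp
      linear_combination -hPQ
    · field_simp

end P1P1Aux

open P1P1Aux

theorem p1p1_parametrization (k αp αm : ℂ)
    (hsum : αp + αm = k) (hprod : αp * αm = 1) (hne : αp ≠ αm) :
    ∃ f : Projectivization ℂ (Fin 2 → ℂ) × Projectivization ℂ (Fin 2 → ℂ) →
        {x : Projectivization ℂ (Fin 5 → ℂ) //
          ∃ (v : Fin 5 → ℂ) (hv : v ≠ 0), x = Projectivization.mk ℂ v hv ∧
            v 0 + v 3 = k * v 4 ∧ v 0 * v 3 - v 1 * v 2 = (v 4) ^ 2},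
      Function.Bijective f ∧
      ∀ (S T U V : ℂ) (hST : ![S, T] ≠ 0) (hUV : ![U, V] ≠ 0),
        ∃ hvec : ![(αm * S * U + αp * T * V) / (αp - αm), S * V, T * U,
            (αp * S * U + αm * T * V) / (αp - αm),
            (S * U + T * V) / (αp - αm)] ≠ 0,
          (f (Projectivization.mk ℂ ![S, T] hST,
              Projectivization.mk ℂ ![U, V] hUV)).1 =
            Projectivization.mk ℂ
              ![(αm * S * U + αp * T * V) / (αp - αm), S * V, T * U,
                (αp * S * U + αm * T * V) / (αp - αm),
                (S * U + T * V) / (αp - αm)] hvec := by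
  refine ⟨fmap k αp αm hsum hprod hne,
    ⟨fmap_inj k αp αm hsum hprod hne, fmap_surj k αp αm hsum hprod hne⟩,
    fun S T U V hST hUV =>
      ⟨Fv_ne (sub_ne_zero.mpr hne) (vec2_ne hST) (vec2_ne hUV),
        fmap_mk k αp αm hsum hprod hne S T U V hST hUV⟩⟩
end
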